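/- Let d be a natural number, l > 0, L > 0, and let f : ℝ^d → ℝ^d be Lipschitz with constant L. Let u₀, m ∈ ℝ^d, define the linear reconstruction u_θ(s) = u₀ + (s l) • m for s ∈ [0, 1], and let u_T : [0, 1] → ℝ^d be differentiable with u_T(0) = u₀ and u_T'(s) = l • f(u_T(s)) for all s ∈ [0, 1]. Define the path residual r(s) = l • (m − f(u_θ(s))). Then the endpoint error satisfies ‖u_θ(1) − u_T(1)‖ ≤ √(∫_{0}^{1} ‖r(s)‖² ds) · √((exp(2 l L) − 1) / (2 l L)). -/

import Mathlib

open MeasureTheory intervalIntegral Set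

open MeasureTheory intervalIntegral Set

lemma cs_aux (F g : ℝ → ℝ) (hF : Continuous F) (hg : Continuous g)
    (hFn : ∀ s, 0 ≤ F s) (hgn : ∀ s, 0 ≤ g s) :
    ∫ s in (0:ℝ)..1, F s * g s ≤
      Real.sqrt (∫ s in (0:ℝ)..1, F s ^ 2) * Real.sqrt (∫ s in (0:ℝ)..1, g s ^ 2) := by
  set μ : Measure ℝ := volume.restrict (Set.Ioc (0:ℝ) 1) with hμ
  haveI : IsFiniteMeasure μ := by
    constructor
    rw [hμ, Measure.restrict_apply MeasurableSet.univ, Set.univ_inter, Real.volume_Ioc]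
    exact ENNReal.ofReal_lt_top
  have hpq : Real.HolderConjugate 2 2 := ⟨by norm_num, by norm_num, by norm_num⟩
  have memF : MemLp F (ENNReal.ofReal 2) μ := by
    obtain ⟨C, hC⟩ := isCompact_Icc.exists_bound_of_continuousOn
      (hF.continuousOn : ContinuousOn F (Set.Icc (0:ℝ) 1))
    refine MemLp.of_bound hF.aestronglyMeasurable C ?_
    filter_upwards [ae_restrict_mem measurableSet_Ioc] with x hx
    exact hC x (Set.Ioc_subset_Icc_self hx)
  have memG : MemLp g (ENNReal.ofReal 2) μ := by
    obtain ⟨C, hC⟩ := isCompact_Icc.exists_bound_of_continuousOn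
      (hg.continuousOn : ContinuousOn g (Set.Icc (0:ℝ) 1))
    refine MemLp.of_bound hg.aestronglyMeasurable C ?_
    filter_upwards [ae_restrict_mem measurableSet_Ioc] with x hx
    exact hC x (Set.Ioc_subset_Icc_self hx)
  have key := MeasureTheory.integral_mul_le_Lp_mul_Lq_of_nonneg hpq
    (Filter.Eventually.of_forall hFn) (Filter.Eventually.of_forall hgn) memF memG
  rw [intervalIntegral.integral_of_le (zero_le_one), intervalIntegral.integral_of_le (zero_le_one),
    intervalIntegral.integral_of_le (zero_le_one)]
  calc ∫ s in Set.Ioc (0:ℝ) 1, F s * g s = ∫ a, F a * g a ∂μ := rfl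
    _ ≤ (∫ a, F a ^ (2:ℝ) ∂μ) ^ (1/(2:ℝ)) * (∫ a, g a ^ (2:ℝ) ∂μ) ^ (1/(2:ℝ)) := key
    _ = Real.sqrt (∫ s in Set.Ioc (0:ℝ) 1, F s ^ 2) *
        Real.sqrt (∫ s in Set.Ioc (0:ℝ) 1, g s ^ 2) := by
      simp only [Real.rpow_two, ← Real.sqrt_eq_rpow, hμ]


lemma exp_sq_integral (c : ℝ) (hc : 0 < c) :
    ∫ s in (0:ℝ)..1, Real.exp (c * (1 - s)) ^ 2 = (Real.exp (2 * c) - 1) / (2 * c) := by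
  have hne : (2 : ℝ) * c ≠ 0 := by positivity
  have hderiv : ∀ x ∈ Set.uIcc (0:ℝ) 1,
      HasDerivAt (fun t : ℝ => -(1 / (2 * c)) * Real.exp (2 * c * (1 - t)))
        (Real.exp (c * (1 - x)) ^ 2) x := by
    intro x _
    have h1 : HasDerivAt (fun t : ℝ => 2 * c * (1 - t)) (-(2 * c)) x := by
      simpa using ((hasDerivAt_id x).const_sub 1).const_mul (2 * c)
    have h2 := (h1.exp).const_mul (-(1 / (2 * c)))
    refine h2.congr_deriv ?_
    rw [sq, ← Real.exp_add]
    field_simp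
    ring_nf
  have hint : IntervalIntegrable (fun s : ℝ => Real.exp (c * (1 - s)) ^ 2) MeasureTheory.volume 0 1 := by
    apply Continuous.intervalIntegrable
    continuity
  rw [intervalIntegral.integral_eq_sub_of_hasDerivAt hderiv hint]
  simp only [mul_zero, sub_zero, mul_one, sub_self, Real.exp_zero]
  field_simp
  ring



/-- A-posteriori endpoint error bound in terms of the squared MeanFlow
path-residual loss: `‖u_θ(1) − u_T(1)‖ ≤ √(∫₀¹ ‖r s‖² ds) · √((exp(2lL) − 1)/(2lL))`. -/
theorem stmt_5 (d : ℕ) (l L : ℝ) (hl : 0 < l) (hL : 0 < L)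
    (f : EuclideanSpace ℝ (Fin d) → EuclideanSpace ℝ (Fin d))
    (hf : ∀ a b, ‖f a - f b‖ ≤ L * ‖a - b‖)
    (u₀ m : EuclideanSpace ℝ (Fin d))
    (uθ uT : ℝ → EuclideanSpace ℝ (Fin d))
    (huθ : ∀ s : ℝ, uθ s = u₀ + (s * l) • m)
    (h0 : uT 0 = u₀)
    (huT : ∀ s ∈ Set.Icc (0:ℝ) 1,
      HasDerivWithinAt uT (l • f (uT s)) (Set.Icc (0:ℝ) 1) s)
    (r : ℝ → EuclideanSpace ℝ (Fin d))
    (hr : ∀ s : ℝ, r s = l • (m - f (uθ s))) :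
    ‖uθ 1 - uT 1‖ ≤ Real.sqrt (∫ s in (0:ℝ)..1, ‖r s‖ ^ 2) *
      Real.sqrt ((Real.exp (2 * l * L) - 1) / (2 * l * L)) := by
  -- continuity facts
  have hfc : Continuous f := by
    have hlip : LipschitzWith (Real.toNNReal L) f := by
      apply LipschitzWith.of_dist_le_mul
      intro a b
      rw [dist_eq_norm, dist_eq_norm]
      simpa [Real.coe_toNNReal L hL.le] using hf a b
    exact hlip.continuous
  have hθeq : uθ = fun s : ℝ => u₀ + (s * l) • m := funext huθ
  have huθc : Continuous uθ := by
    rw [hθeq]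
    exact continuous_const.add ((continuous_id.mul continuous_const).smul continuous_const)
  have hrc : Continuous r := by
    have h : r = fun s => l • (m - f (uθ s)) := funext hr
    rw [h]
    exact (continuous_const.sub (hfc.comp huθc)).const_smul l
  have huTc : ContinuousOn uT (Set.Icc 0 1) := fun s hs => (huT s hs).continuousWithinAt
  have hθd : ∀ x : ℝ, HasDerivAt uθ (l • m) x := by
    intro x
    rw [hθeq]
    simpa using (((hasDerivAt_id x).mul_const l).smul_const m).const_add u₀
  have huθ0 : uθ 0 = u₀ := by rw [huθ 0]; simp
  -- clamp
  set c : ℝ → ℝ := fun s => max 0 (min 1 s) with hc_def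
  have hc_cont : Continuous c := continuous_const.max (continuous_const.min continuous_id)
  have hc_mem : ∀ s, c s ∈ Set.Icc (0:ℝ) 1 :=
    fun s => ⟨le_max_left _ _, max_le zero_le_one (min_le_left _ _)⟩
  have hc_eq : ∀ s ∈ Set.Icc (0:ℝ) 1, c s = s := by
    intro s hs
    simp only [hc_def, min_eq_right hs.2, max_eq_right hs.1]
  -- the speed function n and its primitive E
  set n : ℝ → ℝ := fun s => ‖l • m - l • f (uT (c s))‖ with hn_def
  have huTcc : Continuous fun s => uT (c s) := huTc.comp_continuous hc_cont hc_mem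
  have hnc : Continuous n := (continuous_const.sub ((hfc.comp huTcc).const_smul l)).norm
  set E : ℝ → ℝ := fun t => ∫ τ in (0:ℝ)..t, n τ with hE_def
  have hE : ∀ t, HasDerivAt E (n t) t :=
    fun t => (hnc.integral_hasStrictDerivAt 0 t).hasDerivAt
  have hEc : Continuous E := continuous_iff_continuousAt.2 fun t => (hE t).continuousAt
  have hE0 : E 0 = 0 := intervalIntegral.integral_same
  -- step (a)
  have ha : ∀ t ∈ Set.Icc (0:ℝ) 1, ‖uθ t - uT t‖ ≤ E t := by
    intro t ht
    have hIcc : Set.Icc (0:ℝ) t ⊆ Set.Icc (0:ℝ) 1 := Set.Icc_subset_Icc le_rfl ht.2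
    have hcont : ContinuousOn (fun s => uθ s - uT s) (Set.Icc 0 t) :=
      (huθc.continuousOn).sub (huTc.mono hIcc)
    have hderiv : ∀ x ∈ Set.Ioo (0:ℝ) t,
        HasDerivWithinAt (fun s => uθ s - uT s) (l • m - l • f (uT x)) (Set.Ioi x) x := by
      intro x hx
      have hx1 : x ∈ Set.Icc (0:ℝ) 1 := ⟨hx.1.le, (hx.2.le.trans ht.2)⟩
      have hTd : HasDerivWithinAt uT (l • f (uT x)) (Set.Ioi x) x :=
        (huT x hx1).mono_of_mem_nhdsWithin (Icc_mem_nhdsGT_of_mem ⟨hx.1.le, lt_of_lt_of_le hx.2 ht.2⟩)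
      exact ((hθd x).hasDerivWithinAt).sub hTd
    have hint : IntervalIntegrable (fun s => l • m - l • f (uT s)) volume 0 t := by
      apply ContinuousOn.intervalIntegrable
      rw [Set.uIcc_of_le ht.1]
      exact continuousOn_const.sub (((hfc.comp_continuousOn (huTc.mono hIcc))).const_smul l)
    have hsub := intervalIntegral.integral_eq_sub_of_hasDeriv_right_of_le ht.1 hcont hderiv hint
    have he0 : uθ 0 - uT 0 = 0 := by rw [huθ0, h0, sub_self]
    rw [he0, sub_zero] at hsub
    calc ‖uθ t - uT t‖ = ‖∫ s in (0:ℝ)..t, (l • m - l • f (uT s))‖ := by rw [hsub]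
      _ ≤ ∫ s in (0:ℝ)..t, ‖l • m - l • f (uT s)‖ :=
          intervalIntegral.norm_integral_le_integral_norm ht.1
      _ = E t := by
          rw [hE_def]
          apply intervalIntegral.integral_congr
          intro s hs
          rw [Set.uIcc_of_le ht.1] at hs
          simp only [hn_def, hc_eq s (hIcc hs)]
  -- step (b)
  have hb : ∀ s ∈ Set.Icc (0:ℝ) 1, n s ≤ ‖r s‖ + l * L * E s := by
    intro s hs
    have hsplit : l • m - l • f (uT s) = r s + l • (f (uθ s) - f (uT s)) := by
      rw [hr s, smul_sub, smul_sub]; abel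
    have : n s = ‖r s + l • (f (uθ s) - f (uT s))‖ := by
      simp only [hn_def, hc_eq s hs, hsplit]
    rw [this]
    calc ‖r s + l • (f (uθ s) - f (uT s))‖ ≤ ‖r s‖ + ‖l • (f (uθ s) - f (uT s))‖ :=
          norm_add_le _ _
      _ = ‖r s‖ + l * ‖f (uθ s) - f (uT s)‖ := by
          rw [norm_smul, Real.norm_eq_abs, abs_of_pos hl]
      _ ≤ ‖r s‖ + l * (L * ‖uθ s - uT s‖) := by
          have := hf (uθ s) (uT s)
          nlinarith
      _ ≤ ‖r s‖ + l * L * E s := by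
          have h1 := ha s hs
          nlinarith [mul_le_mul_of_nonneg_left h1 (mul_pos hl hL).le]
  -- step (c): Gronwall via exponential integrating factor
  set G : ℝ → ℝ := fun t => Real.exp (-(l * L) * t) * E t with hG_def
  have hGd : ∀ t, HasDerivAt G (Real.exp (-(l * L) * t) * (n t - l * L * E t)) t := by
    intro t
    have h1 : HasDerivAt (fun t : ℝ => Real.exp (-(l * L) * t))
        (Real.exp (-(l * L) * t) * (-(l * L) * 1)) t :=
      ((hasDerivAt_id t).const_mul (-(l * L))).exp
    have h2 := h1.mul (hE t)
    refine h2.congr_deriv ?_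
    ring
  have hGc : Continuous fun t => Real.exp (-(l * L) * t) * (n t - l * L * E t) := by
    exact ((continuous_const.mul continuous_id).rexp).mul (hnc.sub (continuous_const.mul hEc))
  have hftc : ∫ s in (0:ℝ)..1, Real.exp (-(l * L) * s) * (n s - l * L * E s) = G 1 - G 0 :=
    intervalIntegral.integral_eq_sub_of_hasDerivAt (fun x _ => hGd x) (hGc.intervalIntegrable 0 1)
  have hG0 : G 0 = 0 := by simp [hG_def, hE0]
  have hRc : Continuous (fun s : ℝ => Real.exp (-(l * L) * s) * ‖r s‖) :=
    (Real.continuous_exp.comp (continuous_const.mul continuous_id)).mul hrc.norm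
  have hmono : ∫ s in (0:ℝ)..1, Real.exp (-(l * L) * s) * (n s - l * L * E s)
      ≤ ∫ s in (0:ℝ)..1, Real.exp (-(l * L) * s) * ‖r s‖ := by
    apply intervalIntegral.integral_mono_on zero_le_one (hGc.intervalIntegrable 0 1)
      (hRc.intervalIntegrable 0 1)
    intro s hs
    have hbs := hb s hs
    have hexp : (0:ℝ) ≤ Real.exp (-(l * L) * s) := (Real.exp_pos _).le
    exact mul_le_mul_of_nonneg_left (by linarith) hexp
  have hE1 : E 1 ≤ ∫ s in (0:ℝ)..1, Real.exp (l * L * (1 - s)) * ‖r s‖ := by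
    have hG1 : G 1 ≤ ∫ s in (0:ℝ)..1, Real.exp (-(l * L) * s) * ‖r s‖ := by
      rw [hftc, hG0, sub_zero] at hmono; exact hmono
    have hE1eq : E 1 = Real.exp (l * L) * G 1 := by
      simp only [hG_def]
      rw [← mul_assoc, ← Real.exp_add]
      simp
    rw [hE1eq]
    calc Real.exp (l * L) * G 1
        ≤ Real.exp (l * L) * ∫ s in (0:ℝ)..1, Real.exp (-(l * L) * s) * ‖r s‖ :=
          mul_le_mul_of_nonneg_left hG1 (Real.exp_pos _).le
      _ = ∫ s in (0:ℝ)..1, Real.exp (l * L) * (Real.exp (-(l * L) * s) * ‖r s‖) := by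
          rw [← intervalIntegral.integral_const_mul]
      _ = ∫ s in (0:ℝ)..1, Real.exp (l * L * (1 - s)) * ‖r s‖ := by
          apply intervalIntegral.integral_congr
          intro s _
          show Real.exp (l * L) * (Real.exp (-(l * L) * s) * ‖r s‖)
            = Real.exp (l * L * (1 - s)) * ‖r s‖
          rw [← mul_assoc, ← Real.exp_add]
          ring_nf
  -- Cauchy-Schwarz
  have hcs := cs_aux (fun s => Real.exp (l * L * (1 - s))) (fun s => ‖r s‖)
    (Real.continuous_exp.comp (continuous_const.mul (continuous_const.sub continuous_id)))
    hrc.norm (fun s => (Real.exp_pos _).le) (fun s => norm_nonneg _)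
  have hF2 : ∫ s in (0:ℝ)..1, Real.exp (l * L * (1 - s)) ^ 2
      = (Real.exp (2 * l * L) - 1) / (2 * l * L) := by
    have := exp_sq_integral (l * L) (by positivity)
    rw [this]
    ring_nf
  have hr2 : ∫ s in (0:ℝ)..1, ‖r s‖ ^ 2 = ∫ s in (0:ℝ)..1, ‖r s‖ ^ 2 := rfl
  calc ‖uθ 1 - uT 1‖ ≤ E 1 := ha 1 ⟨zero_le_one, le_rfl⟩
    _ ≤ ∫ s in (0:ℝ)..1, Real.exp (l * L * (1 - s)) * ‖r s‖ := hE1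
    _ ≤ Real.sqrt (∫ s in (0:ℝ)..1, Real.exp (l * L * (1 - s)) ^ 2) *
        Real.sqrt (∫ s in (0:ℝ)..1, ‖r s‖ ^ 2) := hcs
    _ = Real.sqrt (∫ s in (0:ℝ)..1, ‖r s‖ ^ 2) *
        Real.sqrt ((Real.exp (2 * l * L) - 1) / (2 * l * L)) := by
        rw [hF2, mul_comm]
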